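/- arXiv:math/9909163 — 2 statements merged into one kernel-verified Lean document; each statement's English description precedes it below -/
import Mathlib

section
/- Let C ⊆ Mat_{n,s}(F_q) be a linear MDS [ns,k]_s-code in the metric ρ (a k-dimensional subspace with minimum nonzero ρ-weight equal to ns - k + 1). Then its dual code C^⊥ with respect to the inner product ⟨Ω_1,Ω_2⟩ = Σ_{j=1}^n Σ_{i=1}^s ξ'^{(j)}_i ξ''^{(j)}_{s+1-i} is a linear MDS [ns, ns-k]_s-code in the metric ρ, i.e., dim C^⊥ = ns - k and ρ(C^⊥) = k + 1. -/
/-- Rosenbloom–Tsfasman weight of a row vector. -/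
def rhoRow {F : Type*} [Zero F] [DecidableEq F] {s : ℕ} (ω : Fin s → F) : ℕ :=
  (Finset.univ.filter fun j => ω j ≠ 0).sup fun j => j.1 + 1

/-- Rosenbloom–Tsfasman weight of a matrix: the sum of the ρ-weights of its rows. -/
def rhoMat {F : Type*} [Zero F] [DecidableEq F] {n s : ℕ}
    (Ω : Matrix (Fin n) (Fin s) F) : ℕ :=
  ∑ i, rhoRow (Ω i)

/-- The minimum nonzero ρ-weight of a linear code. -/
noncomputable def rhoLin {F : Type*} [Field F] [DecidableEq F] {n s : ℕ}
    (C : Submodule F (Matrix (Fin n) (Fin s) F)) : ℕ :=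
  sInf {r | ∃ Ω ∈ C, Ω ≠ 0 ∧ rhoMat Ω = r}

/-- The inner product `⟨Ω₁,Ω₂⟩ = Σ_j Σ_i Ω₁(j,i)·Ω₂(j,s+1-i)`, pairing the entries of
each row in reversed column order. -/
def rtInner {F : Type*} [Field F] {n s : ℕ} (Ω₁ Ω₂ : Matrix (Fin n) (Fin s) F) : F :=
  ∑ j, ∑ i, Ω₁ j i * Ω₂ j i.rev

/-- The dual code of `C` with respect to the inner product `rtInner`. -/
def dualCode {F : Type*} [Field F] {n s : ℕ}
    (C : Submodule F (Matrix (Fin n) (Fin s) F)) :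
    Submodule F (Matrix (Fin n) (Fin s) F) where
  carrier := {Ω' | ∀ Ω ∈ C, rtInner Ω Ω' = 0}
  zero_mem' := by intro Ω hΩ; simp [rtInner]
  add_mem' := by
    intro a b ha hb Ω hΩ
    have : rtInner Ω (a + b) = rtInner Ω a + rtInner Ω b := by
      simp [rtInner, Matrix.add_apply, mul_add, Finset.sum_add_distrib]
    rw [this, ha Ω hΩ, hb Ω hΩ, add_zero]
  smul_mem' := by
    intro c a ha Ω hΩ
    have : rtInner Ω (c • a) = c * rtInner Ω a := by
      simp only [rtInner, Matrix.smul_apply, smul_eq_mul, Finset.mul_sum]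
      exact Finset.sum_congr rfl fun j _ => Finset.sum_congr rfl fun i _ => by ring
    rw [this, ha Ω hΩ, mul_zero]


section Aux

variable {F : Type*} [Field F] {n s : ℕ}

/-- The inner product `rtInner` as a bilinear form. -/
def rtForm (F : Type*) [Field F] (n s : ℕ) :
    LinearMap.BilinForm F (Matrix (Fin n) (Fin s) F) :=
  LinearMap.mk₂ F rtInner
    (fun a b c => by
      simp [rtInner, Matrix.add_apply, add_mul, Finset.sum_add_distrib])
    (fun c a b => by
      simp [rtInner, Matrix.smul_apply, smul_eq_mul, Finset.mul_sum, mul_assoc])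
    (fun a b c => by
      simp [rtInner, Matrix.add_apply, mul_add, Finset.sum_add_distrib])
    (fun c a b => by
      simp only [rtInner, Matrix.smul_apply, smul_eq_mul, Finset.mul_sum]
      exact Finset.sum_congr rfl fun j _ => Finset.sum_congr rfl fun i _ => by ring)

lemma rtForm_apply (a b : Matrix (Fin n) (Fin s) F) : rtForm F n s a b = rtInner a b := rfl

lemma rtInner_comm (a b : Matrix (Fin n) (Fin s) F) : rtInner a b = rtInner b a := by
  unfold rtInner
  refine Finset.sum_congr rfl fun j _ => ?_
  refine Fintype.sum_equiv (Fin.revPerm) _ _ fun i => ?_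
  simp [mul_comm]

lemma rtForm_isRefl : (rtForm F n s).IsRefl := fun a b h => by
  rwa [rtForm_apply, rtInner_comm, ← rtForm_apply]

lemma rtForm_nondeg [DecidableEq F] : (rtForm F n s).Nondegenerate := by
  have hL : (rtForm F n s).SeparatingLeft := by
    intro Ω h
    ext j i
    have := h (Matrix.single j i.rev 1)
    rw [rtForm_apply] at this
    simp only [rtInner, Matrix.single, Matrix.of_apply, mul_ite, mul_one, mul_zero] at this
    simp only [Fin.rev_inj, Finset.sum_ite_eq, Finset.mem_univ, if_true] at this
    simpa [ite_and, Finset.sum_ite_eq] using this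
  exact ⟨hL, fun y hy => hL y fun x => rtForm_isRefl x y (hy x)⟩

lemma dualCode_eq_orthogonal (C : Submodule F (Matrix (Fin n) (Fin s) F)) :
    dualCode C = (rtForm F n s).orthogonal C := rfl

/-- The subspace of matrices whose row `j` is supported on the first `r j` columns. -/
def shapeSub (F : Type*) [Field F] {n s : ℕ} (r : Fin n → ℕ) :
    Submodule F (Matrix (Fin n) (Fin s) F) where
  carrier := {Ω | ∀ j i, r j ≤ i.1 → Ω j i = 0}
  zero_mem' := by intro j i _; rfl
  add_mem' := by intro a b ha hb j i h; simp [Matrix.add_apply, ha j i h, hb j i h]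
  smul_mem' := by intro c a ha j i h; simp [Matrix.smul_apply, ha j i h]

/-- Restriction to the support coordinates is a linear equivalence. -/
noncomputable def shapeEquiv (r : Fin n → ℕ) :
    (shapeSub F (s := s) r) ≃ₗ[F] ({p : Fin n × Fin s // p.2.1 < r p.1} → F) where
  toFun Ω p := Ω.1 p.1.1 p.1.2
  map_add' a b := rfl
  map_smul' c a := rfl
  invFun g := ⟨fun j i => if h : i.1 < r j then g ⟨(j, i), h⟩ else 0,
    fun j i hle => dif_neg (by omega)⟩
  left_inv Ω := by
    ext j i
    by_cases h : i.1 < r j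
    · simp [h]
    · simp only [h, dif_neg, not_false_iff]
      exact (Ω.2 j i (by omega)).symm
  right_inv g := by funext p; simp [p.2]

lemma finrank_shapeSub {r : Fin n → ℕ} (h : ∀ j, r j ≤ s) :
    Module.finrank F (shapeSub F (s := s) r) = ∑ j, r j := by
  rw [(shapeEquiv r).finrank_eq, Module.finrank_pi]
  rw [Fintype.card_congr (Equiv.subtypeProdEquivSigmaSubtype fun j (i : Fin s) => i.1 < r j)]
  rw [Fintype.card_sigma]
  refine Finset.sum_congr rfl fun j _ => ?_
  have e : {i : Fin s // i.1 < r j} ≃ Fin (r j) :=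
    { toFun := fun x => ⟨x.1.1, x.2⟩
      invFun := fun y => ⟨⟨y.1, lt_of_lt_of_le y.2 (h j)⟩, y.2⟩
      left_inv := fun x => rfl
      right_inv := fun y => rfl }
  rw [Fintype.card_congr e, Fintype.card_fin]

lemma rhoRow_le_of_support {r : ℕ} {ω : Fin s → F} [DecidableEq F]
    (h : ∀ i : Fin s, r ≤ i.1 → ω i = 0) : rhoRow ω ≤ r := by
  refine Finset.sup_le fun i hi => ?_
  rw [Finset.mem_filter] at hi
  by_contra hc
  exact hi.2 (h i (by omega))

lemma rhoMat_le_of_mem_shapeSub [DecidableEq F] {r : Fin n → ℕ}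
    {Ω : Matrix (Fin n) (Fin s) F} (h : Ω ∈ shapeSub F r) : rhoMat Ω ≤ ∑ j, r j :=
  Finset.sum_le_sum fun j _ => rhoRow_le_of_support (h j)

lemma mem_shapeSub_rho [DecidableEq F] (Ω : Matrix (Fin n) (Fin s) F) :
    Ω ∈ shapeSub F (fun j => rhoRow (Ω j)) := by
  intro j i hle
  have hle' : rhoRow (Ω j) ≤ i.1 := hle
  by_contra hc
  have : i.1 + 1 ≤ rhoRow (Ω j) :=
    Finset.le_sup (f := fun i : Fin s => i.1 + 1) (Finset.mem_filter.2 ⟨Finset.mem_univ _, hc⟩)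
  omega

lemma rhoRow_le_s [DecidableEq F] (ω : Fin s → F) : rhoRow ω ≤ s :=
  Finset.sup_le fun i _ => i.2

/-- Shrink a function pointwise to achieve any smaller total sum. -/
lemma exists_le_sum_eq : ∀ (n : ℕ) (f : Fin n → ℕ) (K : ℕ), K ≤ ∑ j, f j →
    ∃ g : Fin n → ℕ, (∀ j, g j ≤ f j) ∧ ∑ j, g j = K := by
  intro n
  induction n with
  | zero =>
    intro f K hK
    refine ⟨f, fun j => le_rfl, ?_⟩
    simp only [Finset.univ_eq_empty, Finset.sum_empty] at hK ⊢
    omega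
  | succ m ih =>
    intro f K hK
    rw [Fin.sum_univ_succ] at hK
    have h2 : K - min (f 0) K ≤ ∑ j : Fin m, f j.succ := by omega
    obtain ⟨g', hg', hsum⟩ := ih (fun j => f j.succ) (K - min (f 0) K) h2
    refine ⟨Fin.cons (min (f 0) K) g', ?_, ?_⟩
    · intro j
      refine Fin.cases ?_ ?_ j
      · simpa using min_le_left _ _
      · intro i; simpa using hg' i
    · rw [Fin.sum_univ_succ]
      simp only [Fin.cons_zero, Fin.cons_succ]
      rw [hsum]
      omega

lemma finrank_matrix_space : Module.finrank F (Matrix (Fin n) (Fin s) F) = n * s := by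
  simp [Module.finrank_matrix]

end Aux

theorem dual_of_MDS_is_MDS {q n s k : ℕ} (F : Type*) [Field F] [Fintype F] [DecidableEq F]
    (hq : Fintype.card F = q) (hk : 1 ≤ k) (hkn : k < n * s)
    (C : Submodule F (Matrix (Fin n) (Fin s) F))
    (hdim : Module.finrank F C = k) (hMDS : rhoLin C = n * s - k + 1) :
    Module.finrank F (dualCode C) = n * s - k ∧ rhoLin (dualCode C) = k + 1 := by
  classical
  have hrefl : (rtForm F n s).IsRefl := rtForm_isRefl
  have hnd : (rtForm F n s).Nondegenerate := rtForm_nondeg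
  have htot : Module.finrank F (Matrix (Fin n) (Fin s) F) = n * s := finrank_matrix_space
  have hdim' : Module.finrank F (dualCode C) = n * s - k := by
    rw [dualCode_eq_orthogonal C,
      LinearMap.BilinForm.finrank_orthogonal hnd, htot, hdim]
  refine ⟨hdim', ?_⟩
  -- lower bound: every nonzero element of the dual has weight at least k+1
  have hlow : ∀ Ω' ∈ dualCode C, Ω' ≠ 0 → k + 1 ≤ rhoMat Ω' := by
    intro Ω' hΩ' hne
    by_contra hc
    push_neg at hc
    have hΩ's : Ω' ∈ shapeSub F (fun j => rhoRow (Ω' j)) := mem_shapeSub_rho Ω'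
    have htle : ∀ j, rhoRow (Ω' j) ≤ s := fun j => rhoRow_le_s _
    have hts : ∑ j, rhoRow (Ω' j) = rhoMat Ω' := rfl
    have h1 : n * s - k ≤ ∑ j, (s - rhoRow (Ω' j)) := by
      have hsum : ∑ j, (s - rhoRow (Ω' j)) + ∑ j, rhoRow (Ω' j) = n * s := by
        rw [← Finset.sum_add_distrib]
        rw [Finset.sum_congr rfl (fun j _ => by have := htle j; omega :
          ∀ j ∈ Finset.univ, (s - rhoRow (Ω' j)) + rhoRow (Ω' j) = s)]
        simp [Finset.sum_const, mul_comm]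
      omega
    obtain ⟨r, hr, hrsum⟩ := exists_le_sum_eq n (fun j => s - rhoRow (Ω' j)) (n * s - k) h1
    have hrs : ∀ j, r j ≤ s := fun j => le_trans (hr j) (Nat.sub_le _ _)
    have hinf : C ⊓ shapeSub F (s := s) r = ⊥ := by
      rw [eq_bot_iff]
      rintro x ⟨hx1, hx2⟩
      rw [Submodule.mem_bot]
      by_contra hx0
      have hle1 : rhoLin C ≤ rhoMat x := Nat.sInf_le ⟨x, hx1, hx0, rfl⟩
      have hle2 : rhoMat x ≤ ∑ j, r j := rhoMat_le_of_mem_shapeSub hx2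
      rw [hMDS] at hle1
      omega
    have hsup : C ⊔ shapeSub F (s := s) r = ⊤ := by
      apply Submodule.eq_top_of_finrank_eq
      have h3 := Submodule.finrank_sup_add_finrank_inf_eq C (shapeSub F (s := s) r)
      rw [hinf, finrank_bot, add_zero, hdim, finrank_shapeSub hrs, hrsum] at h3
      rw [h3, htot]
      omega
    have hall : ∀ Ω, rtForm F n s Ω Ω' = 0 := by
      intro Ω
      have hmem : Ω ∈ C ⊔ shapeSub F (s := s) r := hsup ▸ Submodule.mem_top
      obtain ⟨c, hc', v, hv, rfl⟩ := Submodule.mem_sup.1 hmem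
      have hBc : rtForm F n s c Ω' = 0 := hΩ' c hc'
      have hBv : rtForm F n s v Ω' = 0 := by
        rw [rtForm_apply]
        refine Finset.sum_eq_zero fun j _ => Finset.sum_eq_zero fun i _ => ?_
        by_cases hi : i.1 < r j
        · have hij : rhoRow (Ω' j) ≤ (Fin.rev i).1 := by
            have h4 := hr j
            have h5 := i.2
            simp only [Fin.rev]
            omega
          rw [hΩ's j _ hij, mul_zero]
        · rw [hv j i (by omega), zero_mul]
      rw [map_add, LinearMap.add_apply, hBc, hBv, add_zero]
    exact hne (hnd.1 Ω' fun Ψ => hrefl Ψ Ω' (hall Ψ))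
  -- a nonzero dual codeword of weight at most k+1
  obtain ⟨u, hu, husum⟩ := exists_le_sum_eq n (fun _ => s) (k + 1)
    (by simp only [Finset.sum_const, Finset.card_univ, Fintype.card_fin, smul_eq_mul]; omega)
  have hVu : Module.finrank F (shapeSub F (s := s) u) = k + 1 := by
    rw [finrank_shapeSub hu, husum]
  have hne_bot : dualCode C ⊓ shapeSub F (s := s) u ≠ ⊥ := by
    intro hbot
    have h3 := Submodule.finrank_sup_add_finrank_inf_eq (dualCode C) (shapeSub F (s := s) u)
    rw [hbot, finrank_bot, add_zero, hdim', hVu] at h3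
    have h4 : Module.finrank F ↥(dualCode C ⊔ shapeSub F (s := s) u) ≤ n * s :=
      htot ▸ Submodule.finrank_le _
    omega
  obtain ⟨Ω₀, hΩ₀, hΩ₀ne⟩ := Submodule.exists_mem_ne_zero_of_ne_bot hne_bot
  have hmem : rhoMat Ω₀ ∈ {r | ∃ Ω ∈ dualCode C, Ω ≠ 0 ∧ rhoMat Ω = r} :=
    ⟨Ω₀, hΩ₀.1, hΩ₀ne, rfl⟩
  have hub : rhoLin (dualCode C) ≤ k + 1 := by
    refine le_trans (Nat.sInf_le hmem) ?_
    refine le_trans (rhoMat_le_of_mem_shapeSub hΩ₀.2) ?_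
    rw [husum]
  have hlb : k + 1 ≤ rhoLin (dualCode C) := by
    obtain ⟨Ω₁, h1, h2, h3⟩ := Nat.sInf_mem (⟨_, hmem⟩ :
      {r | ∃ Ω ∈ dualCode C, Ω ≠ 0 ∧ rhoMat Ω = r}.Nonempty)
    have heq : rhoLin (dualCode C) = sInf {r | ∃ Ω ∈ dualCode C, Ω ≠ 0 ∧ rhoMat Ω = r} := rfl
    rw [heq, ← h3]
    exact hlow Ω₁ h1 h2
  omega
end

section
/- Let q ≥ n-1 be a prime power, let β_1,...,β_n be distinct elements of F_q ∪ {∞}, and let Γ_{n,s}: F_q[z] → Mat_{n,s}(F_q) send f to the matrix whose i-th row is (∂^{s-1}f(β_i), ..., ∂f(β_i), f(β_i)) (hyperderivatives; at ∞, ∂^j f(∞) is the coefficient f_{deg f - j}). Then for 1 ≤ k ≤ ns, the image Γ_{n,s}(M^k) of the space M^k of polynomials of degree < k is a k-dimensional linear code with minimum nonzero ρ-weight exactly ns - k + 1, i.e., a linear MDS [ns,k]_s-code in the metric ρ. -/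
/-- The interpolation matrix `Γ_{n,s} f` of a polynomial `f` (of degree `< k`) at the
nodes `β_i ∈ F ∪ {∞}` (`none` denotes `∞`): the `i`-th row is
`(∂^{s-1} f(β_i), ..., ∂ f(β_i), f(β_i))`, where `∂^j` is the Hasse hyperderivative and,
at `∞`, `∂^j f(∞)` is the coefficient `f_{k-1-j}` (and `0` for `j ≥ k`). -/
noncomputable def GammaMat {F : Type*} [Field F] (n s k : ℕ) (β : Fin n → Option F)
    (f : Polynomial F) : Matrix (Fin n) (Fin s) F :=
  fun i col =>
    match β i with
    | some b => (Polynomial.hasseDeriv (s - 1 - col.1) f).eval b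
    | none => if s - 1 - col.1 < k then f.coeff (k - 1 - (s - 1 - col.1)) else 0

open Polynomial

section Helpers

lemma rhoRow_le {F : Type*} [Zero F] [DecidableEq F] {s : ℕ} (ω : Fin s → F) : rhoRow ω ≤ s :=
  Finset.sup_le fun j _ => j.2

lemma apply_eq_zero {F : Type*} [Zero F] [DecidableEq F] {s : ℕ} {ω : Fin s → F} {c : Fin s}
    (h : rhoRow ω ≤ c.1) : ω c = 0 := by
  by_contra hc
  have : c.1 + 1 ≤ rhoRow ω :=
    Finset.le_sup (f := fun j : Fin s => j.1 + 1) (Finset.mem_filter.2 ⟨Finset.mem_univ _, hc⟩)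
  omega

lemma rhoRow_eq_of {F : Type*} [Zero F] [DecidableEq F] {s : ℕ} {ω : Fin s → F} {c : Fin s}
    (h1 : ω c ≠ 0) (h2 : ∀ c' : Fin s, c.1 < c'.1 → ω c' = 0) : rhoRow ω = c.1 + 1 := by
  apply le_antisymm
  · refine Finset.sup_le fun j hj => ?_
    rcases Finset.mem_filter.1 hj with ⟨-, hjne⟩
    by_contra hlt
    exact hjne (h2 j (by omega))
  · exact Finset.le_sup (f := fun j : Fin s => j.1 + 1)
      (Finset.mem_filter.2 ⟨Finset.mem_univ _, h1⟩)

lemma rhoRow_zero {F : Type*} [Zero F] [DecidableEq F] {s : ℕ} {ω : Fin s → F}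
    (h : ∀ c, ω c = 0) : rhoRow ω = 0 := by
  unfold rhoRow
  rw [Finset.filter_false_of_mem (fun c _ => by simp [h c])]
  simp

lemma GammaMat_some {F : Type*} [Field F] {n s k : ℕ} {β : Fin n → Option F} {f : Polynomial F}
    {i : Fin n} {b : F} (h : β i = some b) (col : Fin s) :
    GammaMat n s k β f i col = (Polynomial.hasseDeriv (s - 1 - col.1) f).eval b := by
  simp only [GammaMat, h]

lemma GammaMat_none {F : Type*} [Field F] {n s k : ℕ} {β : Fin n → Option F} {f : Polynomial F}
    {i : Fin n} (h : β i = none) (col : Fin s) :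
    GammaMat n s k β f i col
      = if s - 1 - col.1 < k then f.coeff (k - 1 - (s - 1 - col.1)) else 0 := by
  simp only [GammaMat, h]

/-- `Γ_{n,s}` as a linear map. -/
noncomputable def GammaLin {F : Type*} [Field F] (n s k : ℕ) (β : Fin n → Option F) :
    Polynomial F →ₗ[F] Matrix (Fin n) (Fin s) F where
  toFun := GammaMat n s k β
  map_add' f g := by
    ext i col
    rcases h : β i with _ | b
    · simp only [GammaMat_none h, Matrix.add_apply, coeff_add]
      split <;> simp
    · simp only [GammaMat_some h, Matrix.add_apply, map_add, eval_add]
  map_smul' c f := by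
    ext i col
    rcases h : β i with _ | b
    · simp only [GammaMat_none h, Matrix.smul_apply, coeff_smul, RingHom.id_apply, smul_eq_mul]
      split <;> simp
    · simp only [GammaMat_some h, Matrix.smul_apply, map_smul, eval_smul, RingHom.id_apply,
        smul_eq_mul]

lemma taylor_X_sub_C_pow {F : Type*} [Field F] (b : F) (m : ℕ) :
    taylor b ((X - C b) ^ m) = X ^ m := by
  have h1 : taylor b (X - C b) = X := by
    rw [map_sub, taylor_X, taylor_C]; ring
  rw [show (taylor b ((X - C b) ^ m)) = taylorAlgHom b ((X - C b)^m) from rfl, map_pow]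
  rw [show (taylorAlgHom b (X - C b) : Polynomial F) = taylor b (X - C b) from rfl, h1]

lemma dvd_of_hasse {F : Type*} [Field F] {f : Polynomial F} {b : F} {m : ℕ}
    (h : ∀ j < m, (hasseDeriv j f).eval b = 0) : (X - C b) ^ m ∣ f := by
  have hX : X ^ m ∣ taylor b f :=
    X_pow_dvd_iff.2 fun d hd => by rw [taylor_coeff]; exact h d hd
  have h2 : taylor (-b) (X ^ m) ∣ taylor (-b) (taylor b f) :=
    by have := map_dvd (taylorAlgHom (-b)) hX; rwa [taylorAlgHom_apply, taylorAlgHom_apply] at this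
  rw [taylor_taylor, neg_add_cancel, taylor_zero] at h2
  have h3 : taylor (-b) (X ^ m) = (X - C b) ^ m := by
    rw [show (taylor (-b) (X^m)) = taylorAlgHom (-b) (X^m) from rfl, map_pow]
    rw [show (taylorAlgHom (-b) X : Polynomial F) = taylor (-b) X from rfl, taylor_X]
    rw [map_neg, sub_eq_add_neg]
  rwa [h3] at h2

lemma hasse_eval_eq_zero {F : Type*} [Field F] {f : Polynomial F} {b : F} {m : ℕ}
    (h : (X - C b) ^ m ∣ f) {j : ℕ} (hj : j < m) : (hasseDeriv j f).eval b = 0 := by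
  obtain ⟨g, rfl⟩ := h
  rw [← taylor_coeff, taylor_mul, taylor_X_sub_C_pow]
  exact X_pow_dvd_iff.1 (dvd_mul_right _ _) j hj

lemma hasse_eval_top {F : Type*} [Field F] {g : Polynomial F} {b : F} {m : ℕ} :
    (hasseDeriv m ((X - C b) ^ m * g)).eval b = g.eval b := by
  rw [← taylor_coeff, taylor_mul, taylor_X_sub_C_pow]
  rw [coeff_X_pow_mul', if_pos le_rfl, Nat.sub_self, taylor_coeff_zero]

lemma sum_min_s (s m : ℕ) : ∀ n : ℕ, ∑ i ∈ Finset.range n, min s (m - i * s) = min m (n * s) := by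
  intro n
  induction n with
  | zero => simp
  | succ n ih =>
    rw [Finset.sum_range_succ, ih, Nat.succ_mul]
    simp only [Nat.min_def]
    split_ifs <;> omega

lemma key_bound {F : Type*} [Field F] [DecidableEq F] {n s k : ℕ} {β : Fin n → Option F}
    (hβ : Function.Injective β) {f : Polynomial F} (hf : f ≠ 0) (hd : f.natDegree < k) :
    ∑ i, (s - rhoRow (GammaMat n s k β f i)) ≤ k - 1 := by
  classical
  set E := fun i => s - rhoRow (GammaMat n s k β f i) with hE
  have hA : ∀ i b, β i = some b → (X - C b) ^ (E i) ∣ f := by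
    intro i b hb
    apply dvd_of_hasse
    intro j hj
    have hr := rhoRow_le (GammaMat n s k β f i)
    simp only [hE] at hj
    have hcol : s - 1 - j < s := by omega
    have hz : GammaMat n s k β f i ⟨s - 1 - j, hcol⟩ = 0 := by
      apply apply_eq_zero; simp only; omega
    rw [GammaMat_some hb] at hz
    rwa [show s - 1 - (s - 1 - j) = j by omega] at hz
  have hB : ∀ i, β i = none → f.natDegree + E i ≤ k - 1 := by
    intro i hb
    by_contra hcon
    push_neg at hcon
    have hr := rhoRow_le (GammaMat n s k β f i)
    have hj : k - 1 - f.natDegree < E i := by omega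
    simp only [hE] at hj
    have hcol : s - 1 - (k - 1 - f.natDegree) < s := by omega
    have hz : GammaMat n s k β f i ⟨s - 1 - (k - 1 - f.natDegree), hcol⟩ = 0 := by
      apply apply_eq_zero; simp only; omega
    rw [GammaMat_none hb] at hz
    rw [show s - 1 - (s - 1 - (k - 1 - f.natDegree)) = k - 1 - f.natDegree by omega,
      if_pos (by omega), show k - 1 - (k - 1 - f.natDegree) = f.natDegree by omega] at hz
    exact hf (leadingCoeff_eq_zero.mp hz)
  have hprod : (∏ i ∈ Finset.univ.filter (fun i => (β i).isSome),
      (X - C ((β i).getD 0)) ^ E i) ∣ f := by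
    apply Finset.prod_dvd_of_coprime
    · intro i hi j hj hij
      simp only [Finset.coe_filter, Set.mem_setOf_eq, Finset.mem_univ, true_and] at hi hj
      obtain ⟨a, ha⟩ := Option.isSome_iff_exists.1 hi
      obtain ⟨c, hc⟩ := Option.isSome_iff_exists.1 hj
      simp only [Function.onFun, ha, hc, Option.getD_some]
      have hac : a ≠ c := by rintro rfl; exact hij (hβ (ha.trans hc.symm))
      exact (isCoprime_X_sub_C_of_isUnit_sub (sub_ne_zero_of_ne hac).isUnit).pow
    · intro i hi
      simp only [Finset.mem_filter, Finset.mem_univ, true_and] at hi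
      obtain ⟨a, ha⟩ := Option.isSome_iff_exists.1 hi
      rw [ha, Option.getD_some]
      exact hA i a ha
  have hdeg : ∑ i ∈ Finset.univ.filter (fun i => (β i).isSome), E i ≤ f.natDegree := by
    have hm : ∀ i ∈ Finset.univ.filter (fun i : Fin n => (β i).isSome),
        ((X - C ((β i).getD 0)) ^ E i).Monic := fun i _ => (monic_X_sub_C _).pow _
    calc ∑ i ∈ Finset.univ.filter (fun i => (β i).isSome), E i
        = (∏ i ∈ Finset.univ.filter (fun i => (β i).isSome),
            (X - C ((β i).getD 0)) ^ E i).natDegree := by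
          rw [Polynomial.natDegree_prod_of_monic _ _ hm]
          simp [natDegree_pow, natDegree_X_sub_C]
      _ ≤ f.natDegree := Polynomial.natDegree_le_of_dvd hprod hf
  rw [← Finset.sum_filter_add_sum_filter_not Finset.univ (fun i => (β i).isSome) E]
  by_cases hex : ∃ i0, β i0 = none
  · obtain ⟨i0, hi0⟩ := hex
    have hTc : Finset.univ.filter (fun i => ¬ (β i).isSome) = {i0} := by
      ext i
      simp only [Finset.mem_filter, Finset.mem_univ, true_and, Finset.mem_singleton,
        Bool.not_eq_true, Option.not_isSome, Option.isSome_eq_false_iff, Option.isNone_iff_eq_none]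
      constructor
      · intro h; exact hβ (h.trans hi0.symm)
      · rintro rfl; exact hi0
    rw [hTc, Finset.sum_singleton]
    have := hB i0 hi0
    omega
  · push_neg at hex
    have hTc : Finset.univ.filter (fun i => ¬ (β i).isSome) = ∅ := by
      ext i
      simp only [Finset.mem_filter, Finset.mem_univ, true_and, Bool.not_eq_true,
        Option.not_isSome, Option.isSome_eq_false_iff, Option.isNone_iff_eq_none, Finset.notMem_empty,
        iff_false]
      exact hex i
    rw [hTc, Finset.sum_empty]
    omega

lemma exists_extremal {F : Type*} [Field F] [DecidableEq F] {n s k : ℕ} (β : Fin n → Option F)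
    (hβ : Function.Injective β) (hk : 1 ≤ k) (hkn : k ≤ n * s) :
    ∃ f : Polynomial F, f.degree < (k : ℕ) ∧
      rhoMat (GammaMat n s k β f) = n * s - k + 1 ∧ GammaMat n s k β f ≠ 0 := by
  classical
  set e : Fin n → ℕ := fun i => min s ((k - 1) - i.1 * s) with he
  have hes : ∀ i, e i ≤ s := fun i => min_le_left _ _
  have hek : ∀ i, e i ≤ k - 1 := fun i => le_trans (min_le_right _ _) (by omega)
  have hsum : ∑ i, e i = k - 1 := by
    rw [he, Fin.sum_univ_eq_sum_range (fun j => min s ((k - 1) - j * s)) n, sum_min_s]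
    have : k - 1 ≤ n * s := by omega
    omega
  set g : Fin n → Polynomial F := fun i => (β i).elim 1
      (fun b => (X - C b) ^ e i) with hg
  have hgm : ∀ i, (g i).Monic := by
    intro i
    rcases h : β i with _ | b
    · simp only [hg, h, Option.elim_none]; exact monic_one
    · simp only [hg, h, Option.elim_some]; exact (monic_X_sub_C b).pow _
  set f : Polynomial F := ∏ i, g i with hf
  have hfm : f.Monic := monic_prod_of_monic _ _ fun i _ => hgm i
  have hf0 : f ≠ 0 := hfm.ne_zero
  have hd : f.natDegree = ∑ i, (β i).elim 0 (fun _ => e i) := by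
    rw [hf, natDegree_prod_of_monic _ _ fun i _ => hgm i]
    refine Finset.sum_congr rfl fun i _ => ?_
    rcases h : β i with _ | b
    · simp only [hg, h, Option.elim_none, natDegree_one]
    · simp only [hg, h, Option.elim_some, natDegree_pow, natDegree_X_sub_C, mul_one]
  have hdle : f.natDegree ≤ k - 1 := by
    rw [hd, ← hsum]
    refine Finset.sum_le_sum fun i _ => ?_
    rcases h : β i with _ | b <;> simp [h]
  have hdeg : f.degree < (k : ℕ) := by
    rw [← Polynomial.natDegree_lt_iff_degree_lt hf0]
    omega
  have hrow : ∀ i, rhoRow (GammaMat n s k β f i) = s - e i := by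
    intro i
    rcases hbi : β i with _ | b
    · -- infinity row
      have h2 : ∀ j ∈ Finset.univ.erase i, (β j).elim 0 (fun _ => e j) = e j := by
        intro j hj
        rcases hbj : β j with _ | c
        · exact absurd (hβ (hbj.trans hbi.symm)) (Finset.mem_erase.1 hj).1
        · simp
      have hdi : f.natDegree + e i = k - 1 := by
        calc f.natDegree + e i
            = ((∑ j ∈ Finset.univ.erase i, (β j).elim 0 (fun _ => e j))
                + (β i).elim 0 (fun _ => e i)) + e i := by
              rw [hd, Finset.sum_erase_add _ _ (Finset.mem_univ i)]
          _ = (∑ j ∈ Finset.univ.erase i, e j) + e i := by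
              rw [Finset.sum_congr rfl h2, hbi]; simp
          _ = ∑ j, e j := Finset.sum_erase_add _ _ (Finset.mem_univ i)
          _ = k - 1 := hsum
      have hzero : ∀ c : Fin s, s - 1 - c.1 < e i → GammaMat n s k β f i c = 0 := by
        intro c hc
        rw [GammaMat_none hbi, if_pos (by have := hek i; omega)]
        apply coeff_eq_zero_of_natDegree_lt
        have := hek i
        omega
      rcases eq_or_lt_of_le (hes i) with heq | hlt
      · rw [rhoRow_zero fun c => hzero c (by have := c.2; omega)]
        omega
      · have hcol : s - 1 - e i < s := by omega
        rw [rhoRow_eq_of (c := ⟨s - 1 - e i, hcol⟩) ?_ ?_]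
        · show s - 1 - e i + 1 = s - e i
          omega
        · rw [GammaMat_none hbi]
          simp only
          rw [show s - 1 - (s - 1 - e i) = e i by omega, if_pos (by have := hek i; omega),
            show k - 1 - e i = f.natDegree by omega]
          rw [hfm.coeff_natDegree]
          exact one_ne_zero
        · intro c' hc'
          exact hzero c' (by have := c'.2; simp only at hc'; omega)
    · -- finite row
      have hgi : g i = (X - C b) ^ e i := by simp only [hg, hbi, Option.elim_some]
      have hdvd : (X - C b) ^ e i ∣ f := hgi ▸ Finset.dvd_prod_of_mem g (Finset.mem_univ i)
      have hzero : ∀ c : Fin s, s - 1 - c.1 < e i → GammaMat n s k β f i c = 0 := by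
        intro c hc
        rw [GammaMat_some hbi]
        exact hasse_eval_eq_zero hdvd hc
      have h1 : f = (X - C b) ^ e i * ∏ j ∈ Finset.univ.erase i, g j := by
        rw [← hgi, Finset.mul_prod_erase _ g (Finset.mem_univ i)]
      have hne : (hasseDeriv (e i) f).eval b ≠ 0 := by
        rw [h1, hasse_eval_top, eval_prod]
        apply Finset.prod_ne_zero_iff.2
        intro j hj
        rcases hbj : β j with _ | c
        · simp [hg, hbj]
        · have hcb : c ≠ b := fun hcb => (Finset.mem_erase.1 hj).1
            (hβ (by rw [hbj, hcb, hbi]))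
          simp only [hg, hbj, Option.elim_some, eval_pow, eval_sub, eval_X, eval_C]
          exact pow_ne_zero _ (sub_ne_zero_of_ne hcb.symm)
      rcases eq_or_lt_of_le (hes i) with heq | hlt
      · rw [rhoRow_zero fun c => hzero c (by have := c.2; omega)]
        omega
      · have hcol : s - 1 - e i < s := by omega
        rw [rhoRow_eq_of (c := ⟨s - 1 - e i, hcol⟩) ?_ ?_]
        · show s - 1 - e i + 1 = s - e i
          omega
        · rw [GammaMat_some hbi]
          simp only
          rwa [show s - 1 - (s - 1 - e i) = e i by omega]
        · intro c' hc'
          exact hzero c' (by have := c'.2; simp only at hc'; omega)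
  have hrho : rhoMat (GammaMat n s k β f) = n * s - k + 1 := by
    have h1 : rhoMat (GammaMat n s k β f) = ∑ i, (s - e i) :=
      Finset.sum_congr rfl fun i _ => hrow i
    have h2 : ∑ i, (s - e i) + ∑ i, e i = n * s := by
      rw [← Finset.sum_add_distrib,
        Finset.sum_congr rfl fun i _ => Nat.sub_add_cancel (hes i)]
      simp [mul_comm]
    omega
  refine ⟨f, hdeg, hrho, fun h0 => ?_⟩
  have hz : rhoMat (GammaMat n s k β f) = 0 := by
    rw [h0]
    exact Finset.sum_eq_zero fun i _ => rhoRow_zero fun c => rfl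
  omega

theorem interpolation_code_is_MDS {q n s k : ℕ} (F : Type*) [Field F] [Fintype F]
    [DecidableEq F] (hq : Fintype.card F = q) (hqn : n - 1 ≤ q)
    (hk : 1 ≤ k) (hkn : k ≤ n * s)
    (β : Fin n → Option F) (hβ : Function.Injective β) :
    ∃ C : Submodule F (Matrix (Fin n) (Fin s) F),
      (C : Set (Matrix (Fin n) (Fin s) F))
          = (GammaMat n s k β) '' {f : Polynomial F | f.degree < (k : ℕ)} ∧
      Module.finrank F C = k ∧
      sInf {r | ∃ Ω ∈ C, Ω ≠ 0 ∧ rhoMat Ω = r} = n * s - k + 1 := by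
  classical
  set Γ := GammaLin (F := F) n s k β with hΓ
  have hΓapp : ∀ f, Γ f = GammaMat n s k β f := fun f => rfl
  refine ⟨Submodule.map Γ (Polynomial.degreeLT F k), ?_, ?_, ?_⟩
  · ext Ω
    simp only [SetLike.mem_coe, Submodule.mem_map, Set.mem_image, Set.mem_setOf_eq]
    constructor
    · rintro ⟨f, hf, rfl⟩
      exact ⟨f, Polynomial.mem_degreeLT.1 hf, (hΓapp f).symm⟩
    · rintro ⟨f, hf, hΩ⟩
      exact ⟨f, Polynomial.mem_degreeLT.2 hf, (hΓapp f).trans hΩ⟩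
  · have hinj : ∀ f ∈ Polynomial.degreeLT F k, Γ f = 0 → f = 0 := by
      intro f hf h0
      by_contra hne
      have hd : f.natDegree < k := by
        rw [Polynomial.natDegree_lt_iff_degree_lt hne]
        exact Polynomial.mem_degreeLT.1 hf
      have hkb := key_bound (s := s) hβ hne hd
      have hrow0 : ∀ i, rhoRow (GammaMat n s k β f i) = 0 := by
        intro i
        apply rhoRow_zero
        intro c
        have hgz : GammaMat n s k β f = 0 := (hΓapp f).symm.trans h0
        rw [hgz]
        rfl
      rw [Finset.sum_congr rfl fun i _ => by rw [hrow0 i]] at hkb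
      simp only [Nat.sub_zero, Finset.sum_const, Finset.card_univ, Fintype.card_fin,
        smul_eq_mul] at hkb
      omega
    have hinj' : Function.Injective (Γ.comp (Polynomial.degreeLT F k).subtype) := by
      rw [← LinearMap.ker_eq_bot, LinearMap.ker_eq_bot']
      intro m hm
      exact Subtype.ext (hinj m.1 m.2 hm)
    have h1 : Submodule.map Γ (Polynomial.degreeLT F k)
        = LinearMap.range (Γ.comp (Polynomial.degreeLT F k).subtype) := by
      rw [LinearMap.range_comp, Submodule.range_subtype]
    calc Module.finrank F (Submodule.map Γ (Polynomial.degreeLT F k))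
        = Module.finrank F (LinearMap.range (Γ.comp (Polynomial.degreeLT F k).subtype)) := by
          rw [h1]
      _ = Module.finrank F (Polynomial.degreeLT F k) := LinearMap.finrank_range_of_inj hinj'
      _ = k := by
          rw [(Polynomial.degreeLTEquiv F k).finrank_eq, Module.finrank_fin_fun]
  · obtain ⟨f0, hf0deg, hf0rho, hf0ne⟩ := exists_extremal (F := F) β hβ hk hkn
    have hmem : (n * s - k + 1) ∈ {r | ∃ Ω ∈ Submodule.map Γ (Polynomial.degreeLT F k),
        Ω ≠ 0 ∧ rhoMat Ω = r} :=
      ⟨GammaMat n s k β f0,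
        ⟨f0, Polynomial.mem_degreeLT.2 hf0deg, hΓapp f0⟩, hf0ne, hf0rho⟩
    refine le_antisymm (Nat.sInf_le hmem) (le_csInf ⟨_, hmem⟩ ?_)
    rintro r ⟨Ω, hΩ, hΩne, rfl⟩
    obtain ⟨f, hf, rfl⟩ := hΩ
    have hfne : f ≠ 0 := by
      rintro rfl
      exact hΩne (map_zero Γ)
    have hd : f.natDegree < k := by
      rw [Polynomial.natDegree_lt_iff_degree_lt hfne]
      exact Polynomial.mem_degreeLT.1 hf
    have hkb := key_bound (s := s) hβ hfne hd
    have hsum : rhoMat (GammaMat n s k β f)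
        + ∑ i, (s - rhoRow (GammaMat n s k β f i)) = n * s := by
      rw [rhoMat, ← Finset.sum_add_distrib,
        Finset.sum_congr rfl fun i _ => Nat.add_sub_cancel' (rhoRow_le (GammaMat n s k β f i))]
      simp [mul_comm]
    have hΩeq : rhoMat (Γ f) = rhoMat (GammaMat n s k β f) := by rw [hΓapp f]
    omega

end Helpers
end
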